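/- Let S ⊆ ℤ be a finite set with |S| ≥ 3, with λ_B < λ_A lexicographically (strings from the endpoints of the smallest enclosing segment, tail at B = max S). If the tail moves one step right, replacing S by S' = (S \ {max S}) ∪ {max S + 1}, then the new strings satisfy λ'_{B'} < λ'_A; i.e., the configuration stays asymmetric and the tail robot remains the tail. -/

import Mathlib

def lo (S : Finset ℤ) : ℤ := WithTop.untopD 0 S.min
def hi (S : Finset ℤ) : ℤ := WithBot.unbotD 0 S.max

def wordOf (S : Finset ℤ) : List Bool :=
  (List.range ((hi S - lo S).toNat + 1)).map fun i => decide ((lo S + (i : ℤ)) ∈ S)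
lemma flatMap_cast (l : List ℕ) : (l.flatMap fun (a : ℕ) => [(a:ℤ)]) = l.map (fun (a : ℕ) => (a:ℤ)) := by
  induction l with
  | nil => rfl
  | cons x xs ih => rw [List.flatMap_cons, ih]; rfl
lemma wordOf_eq (S : Finset ℤ) : wordOf S
    = (List.range ((hi S - lo S).toNat + 1)).map (fun (i : ℕ) => decide (lo S + (i:ℤ) ∈ S)) := by
  have h : (do let a ← List.range ((hi S - lo S).toNat + 1); pure (((a : ℕ)):ℤ))
      = (List.range ((hi S - lo S).toNat + 1)).map (fun (a : ℕ) => (a:ℤ)) := by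
    rw [← flatMap_cast]; rfl
  simp only [wordOf, h, List.map_map]
  rfl
lemma wordOf_length (S : Finset ℤ) : (wordOf S).length = (hi S - lo S).toNat + 1 := by
  rw [wordOf_eq, List.length_map, List.length_range]
lemma wordOf_getElem? (S : Finset ℤ) (i : ℕ) (h : i < (hi S - lo S).toNat + 1) :
    (wordOf S)[i]? = some (decide (lo S + (i : ℤ) ∈ S)) := by
  rw [wordOf_eq, List.getElem?_map, List.getElem?_range h, Option.map_some]
lemma wordOf_rev_getElem? (S : Finset ℤ) (i : ℕ) (h : i < (hi S - lo S).toNat + 1) :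
    (wordOf S).reverse[i]? = some (decide (lo S + (((hi S - lo S).toNat - i : ℕ) : ℤ) ∈ S)) := by
  rw [List.getElem?_reverse (by rw [wordOf_length]; exact h), wordOf_length,
    wordOf_getElem? S _ (by omega)]
  congr 3

lemma lex_of_getElem? : ∀ (a b : List Bool) (i : ℕ),
    (∀ j < i, a[j]? = b[j]?) → a[i]? = some false → b[i]? = some true →
    List.Lex (· < ·) a b := by
  intro a b i
  induction i generalizing a b with
  | zero =>
    intro _ ha hb
    match a, b with
    | false :: a', true :: b' => exact List.Lex.rel (by decide)
    | [], _ => simp at ha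
    | _, [] => simp at hb
    | true :: a', _ => simp at ha
    | _, false :: b' => simp at hb
  | succ i ih =>
    intro hj ha hb
    match a, b with
    | [], _ => simp at ha
    | _, [] => simp at hb
    | x :: a', y :: b' =>
      have h0 : x = y := by have := hj 0 (Nat.succ_pos i); simpa using this
      subst h0
      exact List.Lex.cons (ih a' b' (fun j hji => by simpa using hj (j+1) (by omega))
        (by simpa using ha) (by simpa using hb))

lemma exists_of_lex : ∀ {a b : List Bool}, List.Lex (· < ·) a b → a.length = b.length →
    ∃ i : ℕ, (∀ j < i, a[j]? = b[j]?) ∧ a[i]? = some false ∧ b[i]? = some true := by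
  intro a b h
  induction h with
  | nil => intro hlen; simp at hlen
  | @rel a' b' x y hxy =>
    intro _
    obtain ⟨hx, hy⟩ := Bool.lt_iff.mp hxy
    exact ⟨0, by simp, by simp [hx], by simp [hy]⟩
  | @cons a' b' x h ih =>
    intro hlen
    obtain ⟨i, h1, h2, h3⟩ := ih (by simpa using hlen)
    refine ⟨i + 1, ?_, by simpa using h2, by simpa using h3⟩
    intro j hj
    match j with
    | 0 => simp
    | j + 1 => simpa using h1 j (by omega)

lemma lo_eq_min' (S : Finset ℤ) (h : S.Nonempty) : lo S = S.min' h := by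
  simp only [lo, ← Finset.coe_min' h]; rfl

lemma hi_eq_max' (S : Finset ℤ) (h : S.Nonempty) : hi S = S.max' h := by
  simp only [hi, ← Finset.coe_max' h]; rfl

/-- After the tail robot moves one step to the right (outside the current smallest
enclosing segment), the configuration stays asymmetric and the tail remains the tail:
the string read from the new tail end is still strictly smaller lexicographically. -/
theorem tail_right_move_preserves (S : Finset ℤ) (hcard : 3 ≤ S.card)
    (hlex : List.Lex (· < ·) (wordOf S).reverse (wordOf S)) :
    List.Lex (· < ·) (wordOf (insert (hi S + 1) (S.erase (hi S)))).reverse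
      (wordOf (insert (hi S + 1) (S.erase (hi S)))) := by
  classical
  have hne : S.Nonempty := Finset.card_pos.mp (by omega)
  have hloS := lo_eq_min' S hne
  have hhiS := hi_eq_max' S hne
  have hmemA : lo S ∈ S := hloS ▸ S.min'_mem hne
  have hmemHi : hi S ∈ S := hhiS ▸ S.max'_mem hne
  have hlo_le : ∀ x ∈ S, lo S ≤ x := fun x hx => hloS ▸ S.min'_le x hx
  have hle_hi : ∀ x ∈ S, x ≤ hi S := fun x hx => hhiS ▸ S.le_max' x hx
  set A := lo S with hA
  set n := (hi S - lo S).toNat with hn_def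
  -- card bound
  have hsub : S ⊆ Finset.Icc A (hi S) := fun x hx => Finset.mem_Icc.mpr ⟨hlo_le x hx, hle_hi x hx⟩
  have hcard2 : S.card ≤ (hi S + 1 - A).toNat := by
    rw [← Int.card_Icc]; exact Finset.card_le_card hsub
  have hAhi : A ≤ hi S := hlo_le _ hmemHi
  have hn2 : 2 ≤ n := by omega
  have hcast : (n : ℤ) = hi S - A := by omega
  have hhi_eq : hi S = A + n := by omega
  have hmemB : A + (n:ℤ) ∈ S := by rw [← hhi_eq]; exact hmemHi
  -- extract first-difference data from hlex
  obtain ⟨k, hkeq, hkrev, hkw⟩ := exists_of_lex hlex (by rw [List.length_reverse])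
  have hk_lt : k < n + 1 := by
    by_contra hc
    rw [List.getElem?_eq_none (by rw [wordOf_length]; omega)] at hkw
    exact nomatch hkw
  rw [wordOf_getElem? S k (by omega)] at hkw
  rw [wordOf_rev_getElem? S k (by omega)] at hkrev
  have hkS : A + (k:ℤ) ∈ S := by
    have := Option.some.inj hkw; exact of_decide_eq_true this
  have hknS : A + ((n - k : ℕ):ℤ) ∉ S := by
    have := Option.some.inj hkrev; exact of_decide_eq_false this
  have hk1 : 1 ≤ k := by
    rcases Nat.eq_zero_or_pos k with h0 | h; · subst h0; simp at hknS; exact absurd hmemB hknS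
    exact h
  have hkn : k ≤ n - 1 := by
    by_contra hc
    have : k = n := by omega
    subst this
    simp at hknS
    exact hknS hmemA
  -- the least index t ≥ 1 with A + t ∈ S
  have hPk : ∃ j : ℕ, 1 ≤ j ∧ A + (j:ℤ) ∈ S := ⟨k, hk1, hkS⟩
  set t := Nat.find hPk with ht_def
  obtain ⟨ht1, htS⟩ := Nat.find_spec hPk
  have htk : t ≤ k := Nat.find_min' hPk ⟨hk1, hkS⟩
  have hzero : ∀ j : ℕ, 1 ≤ j → j < t → A + (j:ℤ) ∉ S := by
    intro j h1 hjt hmem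
    exact Nat.find_min hPk hjt ⟨h1, hmem⟩
  have hzero' : ∀ j : ℕ, 1 ≤ j → j < t → A + ((n - j : ℕ):ℤ) ∉ S := by
    intro j h1 hjt
    have hjk : j < k := lt_of_lt_of_le hjt htk
    have heq := hkeq j hjk
    rw [wordOf_rev_getElem? S j (by omega), wordOf_getElem? S j (by omega)] at heq
    have hiff : (A + ((n - j : ℕ):ℤ) ∈ S) ↔ (A + (j:ℤ) ∈ S) := by
      have := Option.some.inj heq
      exact decide_eq_decide.mp this
    rw [hiff]
    exact hzero j h1 hjt
  -- facts about S'
  set S' := insert (hi S + 1) (S.erase (hi S)) with hS'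
  have hne' : S'.Nonempty := ⟨hi S + 1, Finset.mem_insert_self _ _⟩
  have hmem' : ∀ x : ℤ, x ∈ S' ↔ x = hi S + 1 ∨ (x ∈ S ∧ x ≠ hi S) := by
    intro x
    simp only [hS', Finset.mem_insert, Finset.mem_erase]
    tauto
  have hAneHi : A ≠ hi S := by omega
  have hAS' : A ∈ S' := (hmem' A).mpr (Or.inr ⟨hmemA, hAneHi⟩)
  have hlo' : lo S' = A := by
    rw [lo_eq_min' S' hne']
    apply le_antisymm
    · exact S'.min'_le A hAS'
    · apply Finset.le_min'
      intro y hy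
      rcases (hmem' y).mp hy with h | ⟨h, _⟩
      · omega
      · exact hlo_le y h
  have hhi' : hi S' = hi S + 1 := by
    rw [hi_eq_max' S' hne']
    apply le_antisymm
    · apply Finset.max'_le
      intro y hy
      rcases (hmem' y).mp hy with h | ⟨h, _⟩
      · omega
      · have := hle_hi y h; omega
    · exact S'.le_max' _ (Finset.mem_insert_self _ _)
  have hlen' : (hi S' - lo S').toNat = n + 1 := by rw [hhi', hlo']; omega
  -- membership characterization for S' indices
  have hmem'' : ∀ i : ℕ, (A + (i:ℤ) ∈ S' ↔ (i = n + 1 ∨ (A + (i:ℤ) ∈ S ∧ i ≠ n))) := by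
    intro i
    rw [hmem' (A + (i:ℤ))]
    constructor
    · rintro (h | ⟨h1, h2⟩)
      · left; omega
      · right; exact ⟨h1, by omega⟩
    · rintro (h | ⟨h1, h2⟩)
      · left; omega
      · right; exact ⟨h1, by omega⟩
  -- the two sides' values
  have hval : ∀ i : ℕ, i < n + 2 → (wordOf S')[i]? = some (decide (A + (i:ℤ) ∈ S')) := by
    intro i h
    rw [← hlo', wordOf_getElem? S' i (by omega)]
  have hrval : ∀ i : ℕ, i < n + 2 →
      (wordOf S').reverse[i]? = some (decide (A + ((n + 1 - i : ℕ):ℤ) ∈ S')) := by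
    intro i h
    rw [← hlo', wordOf_rev_getElem? S' i (by rw [hlen']; omega), hlen']
  -- key membership values
  have hS'topFalse : A + ((n:ℕ):ℤ) ∉ S' := by
    rw [hmem'']
    push_neg
    exact ⟨by omega, fun _ => rfl⟩
  have hS'last : A + ((n+1:ℕ):ℤ) ∈ S' := (hmem'' (n+1)).mpr (Or.inl rfl)
  -- apply the lex constructor at position t
  apply lex_of_getElem? _ _ t
  · intro j hjt
    have hjk : j ≤ k := by omega
    rw [hrval j (by omega), hval j (by omega)]
    congr 1
    apply decide_eq_decide.mpr
    rcases Nat.eq_zero_or_pos j with h0 | hj1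
    · subst h0
      simp only [Nat.sub_zero]
      constructor
      · intro _; simpa using hAS'
      · intro _; simpa using hS'last
    · -- both sides false
      constructor
      · intro hmem
        exfalso
        rcases Nat.lt_or_ge j 2 with h2 | h2
        · -- j = 1, index n+1-1 = n
          have : j = 1 := by omega
          subst this
          simp only [Nat.add_sub_cancel] at hmem
          exact hS'topFalse hmem
        · -- j ≥ 2
          rw [hmem''] at hmem
          rcases hmem with h | ⟨h, hne2⟩
          · omega
          · have : (n + 1 - j : ℕ) = (n - (j-1) : ℕ) := by omega
            rw [this] at h
            exact hzero' (j-1) (by omega) (by omega) h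
      · intro hmem
        exfalso
        rw [hmem''] at hmem
        rcases hmem with h | ⟨h, _⟩
        · omega
        · exact hzero j hj1 hjt h
  · rw [hrval t (by omega)]
    congr 1
    apply decide_eq_false
    rcases Nat.lt_or_ge t 2 with h2 | h2
    · have : t = 1 := by omega
      rw [this]
      simpa using hS'topFalse
    · intro hmem
      rw [hmem''] at hmem
      rcases hmem with h | ⟨h, hne2⟩
      · omega
      · have : (n + 1 - t : ℕ) = (n - (t-1) : ℕ) := by omega
        rw [this] at h
        exact hzero' (t-1) (by omega) (by omega) h
  · rw [hval t (by omega)]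
    congr 1
    apply decide_eq_true
    rw [hmem'']
    right
    exact ⟨htS, by omega⟩
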